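/- For every x ∈ X^M and every p ∈ {1, 2, ∞}, the Hessian matrix U_c''(x) of the coupled potential satisfies ‖U_c''(x)‖_p ≤ K_{f,g}, where K_{f,g} = ‖g''‖_∞ · x_max + ‖g'‖_∞ + ‖f'‖_∞ · ‖g'‖_∞², ‖·‖_p denotes the matrix operator norm induced by the vector p-norm, and ‖f'‖_∞, ‖g'‖_∞, ‖g''‖_∞ denote the suprema of |f'|, |g'|, |g''| over their respective domains. -/

import Mathlib

open Set Filter

/-- The coupling matrix `A` of size `N × M` with `M = N + w − 1`. -/
noncomputable def Amat (w N : ℕ) (j : Fin N) (k : Fin (N + w - 1)) : ℝ :=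
  if (j : ℕ) ≤ (k : ℕ) ∧ (k : ℕ) < (j : ℕ) + w then (w : ℝ)⁻¹ else 0

/-- The coupled potential `U_c(x) = g(x)ᵀx − G(x) − F(A g(x))`. -/
noncomputable def Uc (w N : ℕ) (f g : ℝ → ℝ) (x : Fin (N + w - 1) → ℝ) : ℝ :=
  (∑ i, (g (x i) * x i - ∫ z in (0:ℝ)..(x i), g z))
    - ∑ j : Fin N, ∫ z in (0:ℝ)..(∑ k, Amat w N j k * g (x k)), f z

open Topology

section Aux

lemma my_fderiv_eq_of_eqOn_interior {E : Type*} [NormedAddCommGroup E] [NormedSpace ℝ E]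
    {φ ψ : E → ℝ} {S : Set E} (hconv : Convex ℝ S)
    {x : E} (hxcl : x ∈ closure (interior S)) (hxS : x ∈ S)
    (heq : ∀ y ∈ interior S, φ y = ψ y)
    {L : E →L[ℝ] ℝ} (hψ : HasFDerivWithinAt ψ L S x)
    (hdiff : DifferentiableAt ℝ φ x) :
    fderiv ℝ φ x = L := by
  have hNB : (𝓝[interior S] x).NeBot := mem_closure_iff_nhdsWithin_neBot.1 hxcl
  have hφx : φ x = ψ x := by
    have h1 : Tendsto φ (𝓝[interior S] x) (𝓝 (φ x)) :=
      hdiff.continuousAt.continuousWithinAt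
    have h2 : Tendsto ψ (𝓝[interior S] x) (𝓝 (ψ x)) :=
      (hψ.continuousWithinAt.mono interior_subset)
    have h1' : Tendsto ψ (𝓝[interior S] x) (𝓝 (φ x)) :=
      h1.congr' (eventually_mem_nhdsWithin.mono fun y hy => heq y hy)
    exact tendsto_nhds_unique h1' h2
  set T : Set E := insert x (interior S) with hT
  have hTS : T ⊆ S := insert_subset hxS (interior_subset)
  have hA : HasFDerivWithinAt φ (fderiv ℝ φ x) T x := hdiff.hasFDerivAt.hasFDerivWithinAt
  have hB : HasFDerivWithinAt φ L T x := by
    refine (hψ.mono hTS).congr ?_ hφx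
    rintro y (rfl | hy)
    · exact hφx
    · exact heq y hy
  have hne : (interior S).Nonempty := by
    by_contra h
    rw [not_nonempty_iff_eq_empty] at h
    rw [h, closure_empty] at hxcl
    exact hxcl
  have hU : UniqueDiffWithinAt ℝ T x := by
    have h1 : UniqueDiffWithinAt ℝ (interior S) x := by
      refine uniqueDiffWithinAt_convex (hconv.interior) ?_ hxcl
      rwa [interior_interior]
    exact h1.mono (subset_insert _ _)
  exact hU.eq hA hB

lemma Amat_nonneg (w N : ℕ) (j : Fin N) (k : Fin (N + w - 1)) : 0 ≤ Amat w N j k := by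
  unfold Amat; split <;> positivity

lemma Amat_row_sum (w N : ℕ) (hw : 1 ≤ w) (j : Fin N) :
    ∑ k, Amat w N j k = 1 := by
  unfold Amat
  rw [Fin.sum_univ_eq_sum_range (fun k => if (j:ℕ) ≤ k ∧ k < (j:ℕ) + w then (w:ℝ)⁻¹ else 0)]
  rw [← Finset.sum_filter]
  have hfil : (Finset.range (N + w - 1)).filter (fun k => (j:ℕ) ≤ k ∧ k < (j:ℕ) + w)
      = Finset.Ico (j:ℕ) ((j:ℕ) + w) := by
    ext k
    simp only [Finset.mem_filter, Finset.mem_range, Finset.mem_Ico]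
    have hj := j.2
    omega
  rw [hfil]
  simp only [Finset.sum_const, Nat.card_Ico, nsmul_eq_mul]
  have : ((j:ℕ) + w - (j:ℕ)) = w := by omega
  rw [this]
  field_simp

lemma Amat_col_sum_le (w N : ℕ) (hw : 1 ≤ w) (k : Fin (N + w - 1)) :
    ∑ j, Amat w N j k ≤ 1 := by
  unfold Amat
  rw [Fin.sum_univ_eq_sum_range (fun j => if j ≤ (k:ℕ) ∧ (k:ℕ) < j + w then (w:ℝ)⁻¹ else 0)]
  rw [← Finset.sum_filter]
  have hsub : (Finset.range N).filter (fun j => j ≤ (k:ℕ) ∧ (k:ℕ) < j + w)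
      ⊆ Finset.Ico ((k:ℕ) + 1 - w) ((k:ℕ) + 1) := by
    intro j hj
    simp only [Finset.mem_filter, Finset.mem_range, Finset.mem_Ico] at *
    omega
  rw [Finset.sum_const, nsmul_eq_mul]
  calc (((Finset.range N).filter (fun j => j ≤ (k:ℕ) ∧ (k:ℕ) < j + w)).card : ℝ) * (w:ℝ)⁻¹
      ≤ (w : ℝ) * (w:ℝ)⁻¹ := by
        apply mul_le_mul_of_nonneg_right _ (by positivity)
        have h1 := Finset.card_le_card hsub
        rw [Nat.card_Ico] at h1
        have h2 : (((Finset.range N).filter (fun j => j ≤ (k:ℕ) ∧ (k:ℕ) < j + w)).card) ≤ w := by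
          omega
        exact_mod_cast h2
    _ ≤ 1 := by
        rw [mul_inv_cancel₀ (by positivity)]

end Aux
noncomputable def projR (n : ℕ) (k : Fin n) : (Fin n → ℝ) →L[ℝ] ℝ :=
  ContinuousLinearMap.proj k

@[simp] lemma projR_apply (n : ℕ) (k : Fin n) (v : Fin n → ℝ) : projR n k v = v k := rfl

section Interior

variable {xmax ymax : ℝ} {f g : ℝ → ℝ}

lemma B_mem_Ioo (hxmax : 0 < xmax)
    (hg_maps : Set.MapsTo g (Set.Icc 0 xmax) (Set.Icc 0 ymax))
    (hg_strict : StrictMonoOn g (Set.Icc 0 xmax))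
    (hg_top : g xmax = ymax)
    {w N : ℕ} (hw : 1 ≤ w)
    (y : Fin (N + w - 1) → ℝ) (hy : ∀ i, y i ∈ Set.Ioo 0 xmax) (j : Fin N) :
    (∑ k, Amat w N j k * g (y k)) ∈ Set.Ioo 0 ymax := by
  have h0mem : (0:ℝ) ∈ Set.Icc 0 xmax := by constructor <;> [rfl; exact hxmax.le]
  have hxmem : xmax ∈ Set.Icc (0:ℝ) xmax := ⟨hxmax.le, le_rfl⟩
  have hg0 : 0 ≤ g 0 := (hg_maps h0mem).1
  have hgval : ∀ k, g (y k) ∈ Set.Ioo (0:ℝ) ymax := by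
    intro k
    have hykm : y k ∈ Set.Icc (0:ℝ) xmax := Set.Ioo_subset_Icc_self (hy k)
    constructor
    · exact lt_of_le_of_lt hg0 (hg_strict h0mem hykm (hy k).1)
    · rw [← hg_top]
      exact hg_strict hykm hxmem (hy k).2
  have hjlt : (j : ℕ) < N + w - 1 := by have := j.2; omega
  set k₀ : Fin (N + w - 1) := ⟨(j:ℕ), hjlt⟩ with hk₀
  have hApos : 0 < Amat w N j k₀ := by
    unfold Amat
    rw [if_pos]
    · have : (0:ℝ) < w := by exact_mod_cast hw
      positivity
    · constructor
      · simp [hk₀]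
      · simp only [hk₀]
        omega
  constructor
  · apply Finset.sum_pos'
    · intro k _
      exact mul_nonneg (Amat_nonneg w N j k) (hgval k).1.le
    · exact ⟨k₀, Finset.mem_univ _, mul_pos hApos (hgval k₀).1⟩
  · have hlt : ∑ k, Amat w N j k * g (y k) < ∑ k, Amat w N j k * ymax := by
      apply Finset.sum_lt_sum
      · intro k _
        exact mul_le_mul_of_nonneg_left (hgval k).2.le (Amat_nonneg w N j k)
      · exact ⟨k₀, Finset.mem_univ _, mul_lt_mul_of_pos_left (hgval k₀).2 hApos⟩
    rwa [← Finset.sum_mul, Amat_row_sum w N hw j, one_mul] at hlt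

lemma hasFDerivAt_Uc (hxmax : 0 < xmax)
    (hf_C1 : ContDiffOn ℝ 1 f (Set.Icc 0 ymax))
    (hg_maps : Set.MapsTo g (Set.Icc 0 xmax) (Set.Icc 0 ymax))
    (hg_strict : StrictMonoOn g (Set.Icc 0 xmax))
    (hg_C2 : ContDiffOn ℝ 2 g (Set.Icc 0 xmax))
    (hg_top : g xmax = ymax)
    {w N : ℕ} (hw : 1 ≤ w)
    (y : Fin (N + w - 1) → ℝ) (hy : ∀ i, y i ∈ Set.Ioo 0 xmax) :
    HasFDerivAt (Uc w N f g)
      (((∑ i, (derivWithin g (Set.Icc 0 xmax) (y i) * y i) • projR (N + w - 1) i)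
        - ∑ j : Fin N, f (∑ k, Amat w N j k * g (y k)) •
            (∑ k, (Amat w N j k * derivWithin g (Set.Icc 0 xmax) (y k)) •
              projR (N + w - 1) k) : (Fin (N + w - 1) → ℝ) →L[ℝ] ℝ)) y := by
  have hymax : 0 < ymax := by
    have h0mem : (0:ℝ) ∈ Set.Icc 0 xmax := ⟨le_rfl, hxmax.le⟩
    have := hg_strict h0mem ⟨hxmax.le, le_rfl⟩ hxmax
    have h2 := (hg_maps h0mem).1
    rw [hg_top] at this
    linarith
  have hgc : ContinuousOn g (Set.Icc 0 xmax) := hg_C2.continuousOn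
  have hgdiff : DifferentiableOn ℝ g (Set.Icc 0 xmax) := hg_C2.differentiableOn two_ne_zero
  set gd : ℝ → ℝ := derivWithin g (Set.Icc 0 xmax) with hgd
  -- derivative of g at interior points
  have hgy : ∀ i, HasDerivAt g (gd (y i)) (y i) := by
    intro i
    have h1 := (hgdiff (y i) (Set.Ioo_subset_Icc_self (hy i))).hasDerivWithinAt
    exact h1.hasDerivAt (Icc_mem_nhds (hy i).1 (hy i).2)
  -- FTC for g
  have hgint : ∀ i, HasDerivAt (fun t => ∫ z in (0:ℝ)..t, g z) (g (y i)) (y i) := by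
    intro i
    apply intervalIntegral.integral_hasDerivAt_right
    · apply ContinuousOn.intervalIntegrable
      apply hgc.mono
      rw [Set.uIcc_of_le (hy i).1.le]
      exact Set.Icc_subset_Icc le_rfl (hy i).2.le
    · exact ContinuousOn.stronglyMeasurableAtFilter isOpen_Ioo
        (hgc.mono Set.Ioo_subset_Icc_self) (y i) (hy i)
    · exact (hgc.continuousWithinAt (Set.Ioo_subset_Icc_self (hy i))).continuousAt
        (Icc_mem_nhds (hy i).1 (hy i).2)
  -- projections
  have hproj : ∀ k : Fin (N + w - 1), HasFDerivAt (fun z : Fin (N + w - 1) → ℝ => z k)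
      (projR (N + w - 1) k) y :=
    fun k => hasFDerivAt_apply (𝕜 := ℝ) k y
  have hgyF : ∀ k, HasFDerivAt (fun z : Fin (N + w - 1) → ℝ => g (z k))
      (gd (y k) • projR (N + w - 1) k) y := by
    intro k
    exact (hgy k).comp_hasFDerivAt y (hproj k)
  -- first sum
  have hterm1 : ∀ i, HasFDerivAt
      (fun z : Fin (N + w - 1) → ℝ => g (z i) * z i - ∫ t in (0:ℝ)..(z i), g t)
      ((gd (y i) * y i) • projR (N + w - 1) i) y := by
    intro i
    have hval : gd (y i) * y i = gd (y i) * y i + g (y i) * 1 - g (y i) := by ring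
    rw [hval]
    exact (((hgy i).mul (hasDerivAt_id (y i))).sub (hgint i)).comp_hasFDerivAt y (hproj i)
  -- B j and its derivative
  have hB : ∀ j : Fin N, HasFDerivAt (fun z : Fin (N + w - 1) → ℝ => ∑ k, Amat w N j k * g (z k))
      (∑ k, (Amat w N j k * gd (y k)) • projR (N + w - 1) k) y := by
    intro j
    apply HasFDerivAt.fun_sum
    intro k _
    have h := (hgyF k).const_mul (Amat w N j k)
    rwa [smul_smul] at h
  -- FTC for f at B j y
  have hfint : ∀ j : Fin N, HasDerivAt (fun t => ∫ z in (0:ℝ)..t, f z)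
      (f (∑ k, Amat w N j k * g (y k))) (∑ k, Amat w N j k * g (y k)) := by
    intro j
    have hBj := B_mem_Ioo hxmax hg_maps hg_strict hg_top hw y hy j
    apply intervalIntegral.integral_hasDerivAt_right
    · apply ContinuousOn.intervalIntegrable
      apply hf_C1.continuousOn.mono
      rw [Set.uIcc_of_le hBj.1.le]
      exact Set.Icc_subset_Icc le_rfl hBj.2.le
    · exact ContinuousOn.stronglyMeasurableAtFilter isOpen_Ioo
        (hf_C1.continuousOn.mono Set.Ioo_subset_Icc_self) _ hBj
    · exact (hf_C1.continuousOn.continuousWithinAt (Set.Ioo_subset_Icc_self hBj)).continuousAt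
        (Icc_mem_nhds hBj.1 hBj.2)
  have hterm2 : ∀ j : Fin N, HasFDerivAt
      (fun z : Fin (N + w - 1) → ℝ => ∫ t in (0:ℝ)..(∑ k, Amat w N j k * g (z k)), f t)
      (f (∑ k, Amat w N j k * g (y k)) •
        (∑ k, (Amat w N j k * gd (y k)) • projR (N + w - 1) k)) y := by
    intro j
    exact (hfint j).comp_hasFDerivAt y (hB j)
  have hfinal := (HasFDerivAt.fun_sum (fun i (_ : i ∈ Finset.univ) => hterm1 i)).sub
    (HasFDerivAt.fun_sum (fun j (_ : j ∈ Finset.univ) => hterm2 j))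
  have hUc : Uc w N f g = fun z : Fin (N + w - 1) → ℝ =>
      (∑ i, (g (z i) * z i - ∫ t in (0:ℝ)..(z i), g t))
        - ∑ j : Fin N, ∫ t in (0:ℝ)..(∑ k, Amat w N j k * g (z k)), f t := rfl
  rw [hUc]
  exact hfinal

end Interior
section Interior2

variable {xmax ymax : ℝ} {f g : ℝ → ℝ}

lemma fderiv_Uc_single (hxmax : 0 < xmax)
    (hf_C1 : ContDiffOn ℝ 1 f (Set.Icc 0 ymax))
    (hg_maps : Set.MapsTo g (Set.Icc 0 xmax) (Set.Icc 0 ymax))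
    (hg_strict : StrictMonoOn g (Set.Icc 0 xmax))
    (hg_C2 : ContDiffOn ℝ 2 g (Set.Icc 0 xmax))
    (hg_top : g xmax = ymax)
    {w N : ℕ} (hw : 1 ≤ w)
    (y : Fin (N + w - 1) → ℝ) (hy : ∀ i, y i ∈ Set.Ioo 0 xmax) (i : Fin (N + w - 1)) :
    fderiv ℝ (Uc w N f g) y (Pi.single i 1)
      = derivWithin g (Set.Icc 0 xmax) (y i)
        * (y i - ∑ j : Fin N, Amat w N j i * f (∑ k, Amat w N j k * g (y k))) := by
  rw [(hasFDerivAt_Uc hxmax hf_C1 hg_maps hg_strict hg_C2 hg_top hw y hy).fderiv]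
  simp only [ContinuousLinearMap.sub_apply, ContinuousLinearMap.coe_sum', Finset.sum_apply,
    ContinuousLinearMap.smul_apply, projR_apply, Pi.single_apply, smul_eq_mul, mul_ite, mul_one,
    mul_zero, Finset.sum_ite_eq', Finset.mem_univ, if_true]
  rw [mul_sub, Finset.mul_sum]
  congr 1
  apply Finset.sum_congr rfl
  intro j _
  ring
section Within

variable {xmax ymax : ℝ} {f g : ℝ → ℝ}

lemma B_mem_Icc (hxmax : 0 < xmax)
    (hg_maps : Set.MapsTo g (Set.Icc 0 xmax) (Set.Icc 0 ymax))
    {w N : ℕ} (hw : 1 ≤ w)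
    (z : Fin (N + w - 1) → ℝ) (hz : ∀ i, z i ∈ Set.Icc 0 xmax) (j : Fin N) :
    (∑ k, Amat w N j k * g (z k)) ∈ Set.Icc 0 ymax := by
  constructor
  · apply Finset.sum_nonneg
    intro k _
    exact mul_nonneg (Amat_nonneg w N j k) (hg_maps (hz k)).1
  · calc ∑ k, Amat w N j k * g (z k) ≤ ∑ k, Amat w N j k * ymax := by
          apply Finset.sum_le_sum
          intro k _
          exact mul_le_mul_of_nonneg_left (hg_maps (hz k)).2 (Amat_nonneg w N j k)
    _ = ymax := by rw [← Finset.sum_mul, Amat_row_sum w N hw j, one_mul]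

lemma hasFDerivWithinAt_psi (hxmax : 0 < xmax)
    (hf_C1 : ContDiffOn ℝ 1 f (Set.Icc 0 ymax))
    (hg_maps : Set.MapsTo g (Set.Icc 0 xmax) (Set.Icc 0 ymax))
    (hg_C2 : ContDiffOn ℝ 2 g (Set.Icc 0 xmax))
    {w N : ℕ} (hw : 1 ≤ w)
    (x : Fin (N + w - 1) → ℝ) (hx : ∀ k, x k ∈ Set.Icc 0 xmax) (i : Fin (N + w - 1)) :
    HasFDerivWithinAt
      (fun z : Fin (N + w - 1) → ℝ => derivWithin g (Set.Icc 0 xmax) (z i)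
        * (z i - ∑ j : Fin N, Amat w N j i * f (∑ k, Amat w N j k * g (z k))))
      ((derivWithin g (Set.Icc 0 xmax) (x i) •
          (projR (N + w - 1) i - ∑ j : Fin N, Amat w N j i •
            (derivWithin f (Set.Icc 0 ymax) (∑ k, Amat w N j k * g (x k)) •
              (∑ k, (Amat w N j k * derivWithin g (Set.Icc 0 xmax) (x k)) •
                projR (N + w - 1) k))))
        + (x i - ∑ j : Fin N, Amat w N j i * f (∑ k, Amat w N j k * g (x k))) •
            (derivWithin (derivWithin g (Set.Icc 0 xmax)) (Set.Icc 0 xmax) (x i) •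
              projR (N + w - 1) i))
      (Set.pi Set.univ fun _ : Fin (N + w - 1) => Set.Icc 0 xmax) x := by
  set S : Set (Fin (N + w - 1) → ℝ) := Set.pi Set.univ fun _ => Set.Icc 0 xmax with hS
  have hxS : x ∈ S := by
    rw [hS, Set.mem_univ_pi]; exact hx
  have hUD : UniqueDiffOn ℝ (Set.Icc (0:ℝ) xmax) := uniqueDiffOn_Icc hxmax
  have hgd_C1 : ContDiffOn ℝ 1 (derivWithin g (Set.Icc 0 xmax)) (Set.Icc 0 xmax) :=
    hg_C2.derivWithin hUD (by norm_num)
  have hgd_diff : DifferentiableOn ℝ (derivWithin g (Set.Icc 0 xmax)) (Set.Icc 0 xmax) :=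
    hgd_C1.differentiableOn one_ne_zero
  have hg_diff : DifferentiableOn ℝ g (Set.Icc 0 xmax) := hg_C2.differentiableOn two_ne_zero
  have hf_diff : DifferentiableOn ℝ f (Set.Icc 0 ymax) := hf_C1.differentiableOn one_ne_zero
  have hprojW : ∀ k : Fin (N + w - 1), HasFDerivWithinAt (fun z : Fin (N + w - 1) → ℝ => z k)
      (projR (N + w - 1) k) S x := fun k => (hasFDerivAt_apply (𝕜 := ℝ) k x).hasFDerivWithinAt
  have hmapsproj : ∀ k : Fin (N + w - 1), Set.MapsTo (fun z : Fin (N + w - 1) → ℝ => z k) S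
      (Set.Icc 0 xmax) := by
    intro k z hz
    rw [hS, Set.mem_univ_pi] at hz
    exact hz k
  -- c z = gd (z i)
  have hc : HasFDerivWithinAt (fun z : Fin (N + w - 1) → ℝ => derivWithin g (Set.Icc 0 xmax) (z i))
      ((derivWithin (derivWithin g (Set.Icc 0 xmax)) (Set.Icc 0 xmax) (x i)) •
        projR (N + w - 1) i) S x := by
    exact HasDerivWithinAt.comp_hasFDerivWithinAt x
      ((hgd_diff (x i) (hx i)).hasDerivWithinAt) (hprojW i) (hmapsproj i)
  -- g (z k)
  have hgW : ∀ k, HasFDerivWithinAt (fun z : Fin (N + w - 1) → ℝ => g (z k))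
      ((derivWithin g (Set.Icc 0 xmax) (x k)) • projR (N + w - 1) k) S x := by
    intro k
    exact HasDerivWithinAt.comp_hasFDerivWithinAt x
      ((hg_diff (x k) (hx k)).hasDerivWithinAt) (hprojW k) (hmapsproj k)
  -- B j
  have hB : ∀ j : Fin N, HasFDerivWithinAt
      (fun z : Fin (N + w - 1) → ℝ => ∑ k, Amat w N j k * g (z k))
      (∑ k, (Amat w N j k * derivWithin g (Set.Icc 0 xmax) (x k)) • projR (N + w - 1) k) S x := by
    intro j
    apply HasFDerivWithinAt.fun_sum
    intro k _
    have h := (hgW k).const_mul (Amat w N j k)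
    rwa [smul_smul] at h
  have hmapsB : ∀ j : Fin N, Set.MapsTo
      (fun z : Fin (N + w - 1) → ℝ => ∑ k, Amat w N j k * g (z k)) S (Set.Icc 0 ymax) := by
    intro j z hz
    rw [hS, Set.mem_univ_pi] at hz
    exact B_mem_Icc hxmax hg_maps hw z hz j
  -- f (B j z)
  have hfB : ∀ j : Fin N, HasFDerivWithinAt
      (fun z : Fin (N + w - 1) → ℝ => f (∑ k, Amat w N j k * g (z k)))
      ((derivWithin f (Set.Icc 0 ymax) (∑ k, Amat w N j k * g (x k))) •
        (∑ k, (Amat w N j k * derivWithin g (Set.Icc 0 xmax) (x k)) • projR (N + w - 1) k))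
      S x := by
    intro j
    exact HasDerivWithinAt.comp_hasFDerivWithinAt x
      ((hf_diff _ (B_mem_Icc hxmax hg_maps hw x hx j)).hasDerivWithinAt) (hB j) (hmapsB j)
  -- d z = z i - sum
  have hd : HasFDerivWithinAt
      (fun z : Fin (N + w - 1) → ℝ =>
        z i - ∑ j : Fin N, Amat w N j i * f (∑ k, Amat w N j k * g (z k)))
      (projR (N + w - 1) i - ∑ j : Fin N, Amat w N j i •
        ((derivWithin f (Set.Icc 0 ymax) (∑ k, Amat w N j k * g (x k))) •
          (∑ k, (Amat w N j k * derivWithin g (Set.Icc 0 xmax) (x k)) • projR (N + w - 1) k)))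
      S x := by
    apply (hprojW i).sub
    apply HasFDerivWithinAt.fun_sum
    intro j _
    exact (hfB j).const_mul (Amat w N j i)
  exact hc.mul hd

end Within
section Norms

lemma le_sSup_abs {s : Set ℝ} {h : ℝ → ℝ} (hcomp : IsCompact s) (hcont : ContinuousOn h s)
    {t : ℝ} (ht : t ∈ s) : |h t| ≤ sSup ((fun u => |h u|) '' s) := by
  apply le_csSup
  · exact (hcomp.image_of_continuousOn hcont.abs).bddAbove
  · exact Set.mem_image_of_mem _ ht

lemma matrix_norm_bounds {n : ℕ} (hn : 0 < n) (H E : Matrix (Fin n) (Fin n) ℝ) (K : ℝ)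
    (hE : ∀ m i, |H m i| ≤ E m i) (hrow : ∀ m, ∑ i, E m i ≤ K)
    (hcol : ∀ i, ∑ m, E m i ≤ K) (hK : 0 ≤ K) :
    (∀ v : Fin n → ℝ, (∑ i, |H.mulVec v i|) ≤ K * ∑ i, |v i|)
    ∧ (∀ v : Fin n → ℝ,
        Real.sqrt (∑ i, (H.mulVec v i) ^ 2) ≤ K * Real.sqrt (∑ i, (v i) ^ 2))
    ∧ (∀ v : Fin n → ℝ, ∀ i, |H.mulVec v i| ≤ K * ⨆ j, |v j|) := by
  haveI : Nonempty (Fin n) := ⟨⟨0, hn⟩⟩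
  have hE0 : ∀ m i, 0 ≤ E m i := fun m i => le_trans (abs_nonneg _) (hE m i)
  have hrowbound : ∀ (v : Fin n → ℝ) m, |H.mulVec v m| ≤ ∑ i, E m i * |v i| := by
    intro v m
    calc |H.mulVec v m| = |∑ i, H m i * v i| := by rfl
      _ ≤ ∑ i, |H m i * v i| := Finset.abs_sum_le_sum_abs _ _
      _ ≤ ∑ i, E m i * |v i| := by
          apply Finset.sum_le_sum
          intro i _
          rw [abs_mul]
          exact mul_le_mul_of_nonneg_right (hE m i) (abs_nonneg _)
  refine ⟨?_, ?_, ?_⟩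
  · -- 1-norm
    intro v
    calc ∑ m, |H.mulVec v m| ≤ ∑ m, ∑ i, E m i * |v i| :=
          Finset.sum_le_sum fun m _ => hrowbound v m
      _ = ∑ i, (∑ m, E m i) * |v i| := by
          rw [Finset.sum_comm]
          exact Finset.sum_congr rfl fun i _ => (Finset.sum_mul _ _ _).symm
      _ ≤ ∑ i, K * |v i| := by
          apply Finset.sum_le_sum
          intro i _
          exact mul_le_mul_of_nonneg_right (hcol i) (abs_nonneg _)
      _ = K * ∑ i, |v i| := by rw [Finset.mul_sum]
  · -- 2-norm
    intro v
    have hsq : (∑ i, (H.mulVec v i) ^ 2) ≤ K ^ 2 * ∑ i, (v i) ^ 2 := by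
      have h1 : ∀ m, (H.mulVec v m) ^ 2 ≤ K * ∑ i, E m i * (v i) ^ 2 := by
        intro m
        have h2 : (H.mulVec v m) ^ 2 ≤ (∑ i, E m i * |v i|) ^ 2 := by
          rw [← sq_abs]
          exact pow_le_pow_left₀ (abs_nonneg _) (hrowbound v m) 2
        have h3 : (∑ i, E m i * |v i|) ^ 2 ≤ (∑ i, E m i) * ∑ i, E m i * (v i) ^ 2 := by
          have hcs := Finset.sum_mul_sq_le_sq_mul_sq Finset.univ
            (fun i => Real.sqrt (E m i)) (fun i => Real.sqrt (E m i) * |v i|)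
          have heq1 : ∀ i, Real.sqrt (E m i) * (Real.sqrt (E m i) * |v i|) = E m i * |v i| := by
            intro i
            rw [← mul_assoc, Real.mul_self_sqrt (hE0 m i)]
          have heq2 : ∀ i, Real.sqrt (E m i) ^ 2 = E m i := fun i => Real.sq_sqrt (hE0 m i)
          have heq3 : ∀ i, (Real.sqrt (E m i) * |v i|) ^ 2 = E m i * (v i) ^ 2 := by
            intro i
            rw [mul_pow, Real.sq_sqrt (hE0 m i), sq_abs]
          calc (∑ i, E m i * |v i|) ^ 2
              = (∑ i, Real.sqrt (E m i) * (Real.sqrt (E m i) * |v i|)) ^ 2 := by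
                congr 1; exact Finset.sum_congr rfl fun i _ => (heq1 i).symm
            _ ≤ (∑ i, Real.sqrt (E m i) ^ 2) * ∑ i, (Real.sqrt (E m i) * |v i|) ^ 2 := hcs
            _ = (∑ i, E m i) * ∑ i, E m i * (v i) ^ 2 := by
                congr 1
                · exact Finset.sum_congr rfl fun i _ => heq2 i
                · exact Finset.sum_congr rfl fun i _ => heq3 i
        have h4 : (∑ i, E m i) * (∑ i, E m i * (v i) ^ 2) ≤ K * ∑ i, E m i * (v i) ^ 2 := by
          apply mul_le_mul_of_nonneg_right (hrow m)
          apply Finset.sum_nonneg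
          intro i _
          exact mul_nonneg (hE0 m i) (sq_nonneg _)
        exact le_trans h2 (le_trans h3 h4)
      calc ∑ m, (H.mulVec v m) ^ 2 ≤ ∑ m, K * ∑ i, E m i * (v i) ^ 2 :=
            Finset.sum_le_sum fun m _ => h1 m
        _ = K * ∑ i, (∑ m, E m i) * (v i) ^ 2 := by
            rw [← Finset.mul_sum, Finset.sum_comm]
            congr 1
            exact Finset.sum_congr rfl fun i _ => (Finset.sum_mul _ _ _).symm
        _ ≤ K * ∑ i, K * (v i) ^ 2 := by
            apply mul_le_mul_of_nonneg_left _ hK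
            apply Finset.sum_le_sum
            intro i _
            exact mul_le_mul_of_nonneg_right (hcol i) (sq_nonneg _)
        _ = K ^ 2 * ∑ i, (v i) ^ 2 := by rw [← Finset.mul_sum]; ring
    calc Real.sqrt (∑ i, (H.mulVec v i) ^ 2) ≤ Real.sqrt (K ^ 2 * ∑ i, (v i) ^ 2) :=
          Real.sqrt_le_sqrt hsq
      _ = K * Real.sqrt (∑ i, (v i) ^ 2) := by
          rw [Real.sqrt_mul (sq_nonneg K), Real.sqrt_sq hK]
  · -- sup-norm
    intro v m
    have hbdd : BddAbove (Set.range fun j => |v j|) := Set.Finite.bddAbove (Set.finite_range _)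
    have hsup0 : 0 ≤ ⨆ j, |v j| := le_ciSup_of_le hbdd (Classical.arbitrary _) (abs_nonneg _)
    calc |H.mulVec v m| ≤ ∑ i, E m i * |v i| := hrowbound v m
      _ ≤ ∑ i, E m i * (⨆ j, |v j|) := by
          apply Finset.sum_le_sum
          intro i _
          exact mul_le_mul_of_nonneg_left (le_ciSup hbdd i) (hE0 m i)
      _ = (∑ i, E m i) * (⨆ j, |v j|) := (Finset.sum_mul _ _ _).symm
      _ ≤ K * ⨆ j, |v j| := mul_le_mul_of_nonneg_right (hrow m) hsup0

end Norms
/-- **Lemma (coupled_scalar_hessian_bound).** For all `x ∈ X^M` and `p ∈ {1,2,∞}`,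
the Hessian matrix `U_c''(x)` satisfies `‖U_c''(x)‖_p ≤ K_{f,g}` with
`K_{f,g} = ‖g''‖_∞ x_max + ‖g'‖_∞ + ‖f'‖_∞ ‖g'‖_∞²`.  The operator-norm bounds are
expressed as `‖U_c''(x) v‖_p ≤ K_{f,g} ‖v‖_p` for every vector `v`. -/
theorem stmt_11
    (xmax ymax : ℝ) (hxmax : 0 < xmax) (hymax : 0 < ymax)
    (f g : ℝ → ℝ)
    (hf_maps : Set.MapsTo f (Set.Icc 0 ymax) (Set.Icc 0 xmax))
    (hf_mono : MonotoneOn f (Set.Icc 0 ymax))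
    (hf_C1 : ContDiffOn ℝ 1 f (Set.Icc 0 ymax))
    (hg_maps : Set.MapsTo g (Set.Icc 0 xmax) (Set.Icc 0 ymax))
    (hg_strict : StrictMonoOn g (Set.Icc 0 xmax))
    (hg_C2 : ContDiffOn ℝ 2 g (Set.Icc 0 xmax))
    (hg_top : g xmax = ymax)
    (w N : ℕ) (hw : 1 ≤ w) (hN : 1 ≤ N)
    (Kf' Kg' Kg'' K : ℝ)
    (hKf' : Kf' = sSup ((fun y => |derivWithin f (Set.Icc 0 ymax) y|) '' Set.Icc 0 ymax))
    (hKg' : Kg' = sSup ((fun x => |derivWithin g (Set.Icc 0 xmax) x|) '' Set.Icc 0 xmax))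
    (hKg'' : Kg'' = sSup ((fun x =>
        |derivWithin (derivWithin g (Set.Icc 0 xmax)) (Set.Icc 0 xmax) x|) '' Set.Icc 0 xmax))
    (hK : K = Kg'' * xmax + Kg' + Kf' * Kg' ^ 2)
    (x : Fin (N + w - 1) → ℝ) (hx : ∀ i, x i ∈ Set.Icc 0 xmax)
    (Hess : Matrix (Fin (N + w - 1)) (Fin (N + w - 1)) ℝ)
    (hHess : ∀ m i, Hess m i
        = fderiv ℝ (fun y => fderiv ℝ (Uc w N f g) y (Pi.single i 1)) x (Pi.single m 1)) :
    (∀ v : Fin (N + w - 1) → ℝ,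
        (∑ i, |Hess.mulVec v i|) ≤ K * ∑ i, |v i|)
    ∧ (∀ v : Fin (N + w - 1) → ℝ,
        Real.sqrt (∑ i, (Hess.mulVec v i) ^ 2) ≤ K * Real.sqrt (∑ i, (v i) ^ 2))
    ∧ (∀ v : Fin (N + w - 1) → ℝ, ∀ i,
        |Hess.mulVec v i| ≤ K * ⨆ j, |v j|) := by
  have hn : 0 < N + w - 1 := by omega
  have hUD : UniqueDiffOn ℝ (Set.Icc (0:ℝ) xmax) := uniqueDiffOn_Icc hxmax
  -- continuity of the (iterated) derivatives on the compact intervals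
  have hgdcont : ContinuousOn (derivWithin g (Set.Icc 0 xmax)) (Set.Icc 0 xmax) :=
    hg_C2.continuousOn_derivWithin hUD one_le_two
  have hgddcont : ContinuousOn
      (derivWithin (derivWithin g (Set.Icc 0 xmax)) (Set.Icc 0 xmax)) (Set.Icc 0 xmax) :=
    (hg_C2.derivWithin hUD (by norm_num)).continuousOn_derivWithin hUD le_rfl
  have hfdcont : ContinuousOn (derivWithin f (Set.Icc 0 ymax)) (Set.Icc 0 ymax) :=
    hf_C1.continuousOn_derivWithin (uniqueDiffOn_Icc hymax) le_rfl
  -- sup bounds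
  have hbg : ∀ t ∈ Set.Icc (0:ℝ) xmax, |derivWithin g (Set.Icc 0 xmax) t| ≤ Kg' := by
    intro t ht; rw [hKg']; exact le_sSup_abs isCompact_Icc hgdcont ht
  have hbgg : ∀ t ∈ Set.Icc (0:ℝ) xmax,
      |derivWithin (derivWithin g (Set.Icc 0 xmax)) (Set.Icc 0 xmax) t| ≤ Kg'' := by
    intro t ht; rw [hKg'']; exact le_sSup_abs isCompact_Icc hgddcont ht
  have hbf : ∀ t ∈ Set.Icc (0:ℝ) ymax, |derivWithin f (Set.Icc 0 ymax) t| ≤ Kf' := by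
    intro t ht; rw [hKf']; exact le_sSup_abs isCompact_Icc hfdcont ht
  have h0x : (0:ℝ) ∈ Set.Icc (0:ℝ) xmax := ⟨le_rfl, hxmax.le⟩
  have h0y : (0:ℝ) ∈ Set.Icc (0:ℝ) ymax := ⟨le_rfl, hymax.le⟩
  have hKg'0 : 0 ≤ Kg' := le_trans (abs_nonneg _) (hbg 0 h0x)
  have hKg''0 : 0 ≤ Kg'' := le_trans (abs_nonneg _) (hbgg 0 h0x)
  have hKf'0 : 0 ≤ Kf' := le_trans (abs_nonneg _) (hbf 0 h0y)
  have hK0 : 0 ≤ K := by rw [hK]; positivity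
  -- the bounding matrix
  set Eb : Matrix (Fin (N + w - 1)) (Fin (N + w - 1)) ℝ := fun m i =>
    (if i = m then Kg'' * xmax + Kg' else 0)
      + Kg' * ∑ j : Fin N, Amat w N j i * (Kf' * (Amat w N j m * Kg')) with hEbdef
  have hEb0 : ∀ m i, 0 ≤ Eb m i := by
    intro m i
    rw [hEbdef]
    apply add_nonneg
    · split
      · positivity
      · exact le_rfl
    · apply mul_nonneg hKg'0
      apply Finset.sum_nonneg
      intro j _
      have := Amat_nonneg w N j i
      have := Amat_nonneg w N j m
      positivity
  -- geometry of the box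
  have hconv : Convex ℝ (Set.pi Set.univ fun _ : Fin (N + w - 1) => Set.Icc (0:ℝ) xmax) :=
    convex_pi fun i _ => convex_Icc 0 xmax
  have hint : interior (Set.pi Set.univ fun _ : Fin (N + w - 1) => Set.Icc (0:ℝ) xmax)
      = Set.pi Set.univ fun _ => Set.Ioo (0:ℝ) xmax := by
    rw [interior_pi_set Set.finite_univ]
    simp [interior_Icc]
  have hxS : x ∈ (Set.pi Set.univ fun _ : Fin (N + w - 1) => Set.Icc (0:ℝ) xmax) :=
    Set.mem_univ_pi.mpr hx
  have hxcl : x ∈ closure (interior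
      (Set.pi Set.univ fun _ : Fin (N + w - 1) => Set.Icc (0:ℝ) xmax)) := by
    rw [hint, closure_pi_set]
    have : ∀ i : Fin (N + w - 1), x i ∈ closure (Set.Ioo (0:ℝ) xmax) := by
      intro i
      rw [closure_Ioo hxmax.ne]
      exact hx i
    exact fun i _ => this i
  -- per-entry bound
  have hentry : ∀ m i, |Hess m i| ≤ Eb m i := by
    intro m i
    rw [hHess m i]
    by_cases hdiff : DifferentiableAt ℝ (fun y => fderiv ℝ (Uc w N f g) y (Pi.single i 1)) x
    · -- differentiable case: the derivative is the genuine one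
      have hL := hasFDerivWithinAt_psi hxmax hf_C1 hg_maps hg_C2 hw x hx i
      have heqf : ∀ y ∈ interior
          (Set.pi Set.univ fun _ : Fin (N + w - 1) => Set.Icc (0:ℝ) xmax),
          (fun y => fderiv ℝ (Uc w N f g) y (Pi.single i 1)) y
            = (fun z : Fin (N + w - 1) → ℝ => derivWithin g (Set.Icc 0 xmax) (z i)
                * (z i - ∑ j : Fin N, Amat w N j i * f (∑ k, Amat w N j k * g (z k)))) y := by
        intro y hy
        rw [hint] at hy
        have hy' : ∀ k, y k ∈ Set.Ioo (0:ℝ) xmax := fun k => hy k (Set.mem_univ k)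
        exact fderiv_Uc_single hxmax hf_C1 hg_maps hg_strict hg_C2 hg_top hw y hy' i
      have hfd := my_fderiv_eq_of_eqOn_interior hconv hxcl hxS heqf hL hdiff
      rw [hfd]
      -- evaluate the linear map at `Pi.single m 1`
      simp only [ContinuousLinearMap.add_apply, ContinuousLinearMap.coe_smul', Pi.smul_apply,
        ContinuousLinearMap.sub_apply, ContinuousLinearMap.coe_sum', Finset.sum_apply,
        ContinuousLinearMap.smul_apply, projR_apply, Pi.single_apply, smul_eq_mul, mul_ite,
        mul_one, mul_zero, Finset.sum_ite_eq', Finset.mem_univ, if_true]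
      -- now a purely arithmetic bound
      have hcj : ∀ j : Fin N, (∑ k, Amat w N j k * g (x k)) ∈ Set.Icc 0 ymax :=
        fun j => B_mem_Icc hxmax hg_maps hw x hx j
      have habs : |derivWithin g (Set.Icc 0 xmax) (x i)| ≤ Kg' := hbg _ (hx i)
      have habsm : |derivWithin g (Set.Icc 0 xmax) (x m)| ≤ Kg' := hbg _ (hx m)
      have hdd : |derivWithin (derivWithin g (Set.Icc 0 xmax)) (Set.Icc 0 xmax) (x i)| ≤ Kg'' :=
        hbgg _ (hx i)
      have hs : |∑ j : Fin N, Amat w N j i *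
            (derivWithin f (Set.Icc 0 ymax) (∑ k, Amat w N j k * g (x k)) *
              (Amat w N j m * derivWithin g (Set.Icc 0 xmax) (x m)))|
          ≤ ∑ j : Fin N, Amat w N j i * (Kf' * (Amat w N j m * Kg')) := by
        refine le_trans (Finset.abs_sum_le_sum_abs _ _) (Finset.sum_le_sum ?_)
        intro j _
        have h1 : |derivWithin f (Set.Icc 0 ymax) (∑ k, Amat w N j k * g (x k))| ≤ Kf' :=
          hbf _ (hcj j)
        rw [abs_mul, abs_mul, abs_mul, abs_of_nonneg (Amat_nonneg w N j i),
          abs_of_nonneg (Amat_nonneg w N j m)]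
        apply mul_le_mul_of_nonneg_left _ (Amat_nonneg w N j i)
        exact mul_le_mul h1 (mul_le_mul_of_nonneg_left habsm (Amat_nonneg w N j m))
          (mul_nonneg (Amat_nonneg w N j m) (abs_nonneg _)) hKf'0
      have hT : (∑ j : Fin N, Amat w N j i * f (∑ k, Amat w N j k * g (x k)))
          ∈ Set.Icc (0:ℝ) xmax := by
        constructor
        · apply Finset.sum_nonneg
          intro j _
          exact mul_nonneg (Amat_nonneg w N j i) (hf_maps (hcj j)).1
        · calc ∑ j : Fin N, Amat w N j i * f (∑ k, Amat w N j k * g (x k))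
              ≤ ∑ j : Fin N, Amat w N j i * xmax := by
                apply Finset.sum_le_sum
                intro j _
                exact mul_le_mul_of_nonneg_left (hf_maps (hcj j)).2 (Amat_nonneg w N j i)
          _ = (∑ j : Fin N, Amat w N j i) * xmax := (Finset.sum_mul _ _ _).symm
          _ ≤ 1 * xmax := mul_le_mul_of_nonneg_right (Amat_col_sum_le w N hw i) hxmax.le
          _ = xmax := one_mul xmax
      have hxT : |x i - ∑ j : Fin N, Amat w N j i * f (∑ k, Amat w N j k * g (x k))| ≤ xmax := by
        rw [abs_le]
        constructor
        · have := (hx i).1; have := hT.2; linarith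
        · have := (hx i).2; have := hT.1; linarith
      rw [hEbdef]
      by_cases him : i = m
      · subst him
        simp only [if_true]
        set a := derivWithin g (Set.Icc 0 xmax) (x i)
        set dd := derivWithin (derivWithin g (Set.Icc 0 xmax)) (Set.Icc 0 xmax) (x i)
        set s := ∑ j : Fin N, Amat w N j i *
            (derivWithin f (Set.Icc 0 ymax) (∑ k, Amat w N j k * g (x k)) *
              (Amat w N j i * a))
        set T := ∑ j : Fin N, Amat w N j i * f (∑ k, Amat w N j k * g (x k))
        have hrw : a * (1 - s) + (x i - T) * dd = a + (x i - T) * dd + -(a * s) := by ring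
        rw [hrw]
        have htri : |a + (x i - T) * dd + -(a * s)|
            ≤ |a| + |x i - T| * |dd| + |a| * |s| := by
          calc |a + (x i - T) * dd + -(a * s)| ≤ |a + (x i - T) * dd| + |-(a * s)| :=
                abs_add_le _ _
            _ ≤ |a| + |(x i - T) * dd| + |a * s| := by
                rw [abs_neg]
                exact add_le_add_left (abs_add_le _ _) _
            _ = |a| + |x i - T| * |dd| + |a| * |s| := by rw [abs_mul, abs_mul]
        have h6 : |x i - T| * |dd| ≤ xmax * Kg'' :=
          mul_le_mul hxT hdd (abs_nonneg _) hxmax.le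
        have h7 : |a| * |s| ≤ Kg' * ∑ j : Fin N, Amat w N j i * (Kf' * (Amat w N j i * Kg')) :=
          mul_le_mul habs hs (abs_nonneg _) hKg'0
        have := le_trans htri (by linarith : |a| + |x i - T| * |dd| + |a| * |s|
          ≤ Kg' + xmax * Kg'' + Kg' * ∑ j : Fin N, Amat w N j i * (Kf' * (Amat w N j i * Kg')))
        calc |a + (x i - T) * dd + -(a * s)|
            ≤ Kg' + xmax * Kg'' + Kg' * ∑ j : Fin N, Amat w N j i * (Kf' * (Amat w N j i * Kg')) :=
              this
          _ = Kg'' * xmax + Kg' + Kg' * ∑ j : Fin N, Amat w N j i * (Kf' * (Amat w N j i * Kg')) := by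
              ring
      · simp only [if_neg him]
        rw [zero_add]
        calc |derivWithin g (Set.Icc 0 xmax) (x i) * ((0:ℝ) - ∑ j : Fin N, Amat w N j i *
              (derivWithin f (Set.Icc 0 ymax) (∑ k, Amat w N j k * g (x k)) *
                (Amat w N j m * derivWithin g (Set.Icc 0 xmax) (x m)))) + 0|
            = |derivWithin g (Set.Icc 0 xmax) (x i)| * |∑ j : Fin N, Amat w N j i *
              (derivWithin f (Set.Icc 0 ymax) (∑ k, Amat w N j k * g (x k)) *
                (Amat w N j m * derivWithin g (Set.Icc 0 xmax) (x m)))| := by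
              rw [add_zero, zero_sub, mul_neg, abs_neg, abs_mul]
          _ ≤ Kg' * ∑ j : Fin N, Amat w N j i * (Kf' * (Amat w N j m * Kg')) :=
              mul_le_mul habs hs (abs_nonneg _) hKg'0
    · rw [fderiv_zero_of_not_differentiableAt hdiff]
      simpa using hEb0 m i
  -- row and column sums
  have hrow : ∀ m, ∑ i, Eb m i ≤ K := by
    intro m
    rw [hEbdef]
    rw [Finset.sum_add_distrib]
    have h1 : (∑ i : Fin (N + w - 1), if i = m then Kg'' * xmax + Kg' else 0)
        = Kg'' * xmax + Kg' := by
      rw [Finset.sum_ite_eq' Finset.univ m (fun _ => Kg'' * xmax + Kg')]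
      simp
    have h2 : (∑ i : Fin (N + w - 1),
          Kg' * ∑ j : Fin N, Amat w N j i * (Kf' * (Amat w N j m * Kg')))
        ≤ Kf' * Kg' ^ 2 := by
      have e1 : ∀ i : Fin (N + w - 1),
          Kg' * ∑ j : Fin N, Amat w N j i * (Kf' * (Amat w N j m * Kg'))
            = ∑ j : Fin N, (Kf' * Kg' ^ 2 * Amat w N j m) * Amat w N j i := by
        intro i
        rw [Finset.mul_sum]
        exact Finset.sum_congr rfl fun j _ => by ring
      calc (∑ i : Fin (N + w - 1),
            Kg' * ∑ j : Fin N, Amat w N j i * (Kf' * (Amat w N j m * Kg')))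
          = ∑ i : Fin (N + w - 1), ∑ j : Fin N,
              (Kf' * Kg' ^ 2 * Amat w N j m) * Amat w N j i := Finset.sum_congr rfl fun i _ => e1 i
        _ = ∑ j : Fin N, (Kf' * Kg' ^ 2 * Amat w N j m) * ∑ i, Amat w N j i := by
            rw [Finset.sum_comm]
            exact Finset.sum_congr rfl fun j _ => (Finset.mul_sum _ _ _).symm
        _ = ∑ j : Fin N, (Kf' * Kg' ^ 2) * Amat w N j m := by
            apply Finset.sum_congr rfl
            intro j _
            rw [Amat_row_sum w N hw j, mul_one]
        _ = (Kf' * Kg' ^ 2) * ∑ j : Fin N, Amat w N j m := (Finset.mul_sum _ _ _).symm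
        _ ≤ (Kf' * Kg' ^ 2) * 1 :=
            mul_le_mul_of_nonneg_left (Amat_col_sum_le w N hw m) (by positivity)
        _ = Kf' * Kg' ^ 2 := mul_one _
    rw [h1, hK]
    linarith
  have hcol : ∀ i, ∑ m, Eb m i ≤ K := by
    intro i
    rw [hEbdef]
    rw [Finset.sum_add_distrib]
    have h1 : (∑ m : Fin (N + w - 1), if i = m then Kg'' * xmax + Kg' else 0)
        = Kg'' * xmax + Kg' := by
      rw [Finset.sum_ite_eq Finset.univ i (fun _ => Kg'' * xmax + Kg')]
      simp
    have h2 : (∑ m : Fin (N + w - 1),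
          Kg' * ∑ j : Fin N, Amat w N j i * (Kf' * (Amat w N j m * Kg')))
        ≤ Kf' * Kg' ^ 2 := by
      have e1 : ∀ m : Fin (N + w - 1),
          Kg' * ∑ j : Fin N, Amat w N j i * (Kf' * (Amat w N j m * Kg'))
            = ∑ j : Fin N, (Kf' * Kg' ^ 2 * Amat w N j i) * Amat w N j m := by
        intro m
        rw [Finset.mul_sum]
        exact Finset.sum_congr rfl fun j _ => by ring
      calc (∑ m : Fin (N + w - 1),
            Kg' * ∑ j : Fin N, Amat w N j i * (Kf' * (Amat w N j m * Kg')))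
          = ∑ m : Fin (N + w - 1), ∑ j : Fin N,
              (Kf' * Kg' ^ 2 * Amat w N j i) * Amat w N j m := Finset.sum_congr rfl fun m _ => e1 m
        _ = ∑ j : Fin N, (Kf' * Kg' ^ 2 * Amat w N j i) * ∑ m, Amat w N j m := by
            rw [Finset.sum_comm]
            exact Finset.sum_congr rfl fun j _ => (Finset.mul_sum _ _ _).symm
        _ = ∑ j : Fin N, (Kf' * Kg' ^ 2) * Amat w N j i := by
            apply Finset.sum_congr rfl
            intro j _
            rw [Amat_row_sum w N hw j, mul_one]
        _ = (Kf' * Kg' ^ 2) * ∑ j : Fin N, Amat w N j i := (Finset.mul_sum _ _ _).symm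
        _ ≤ (Kf' * Kg' ^ 2) * 1 :=
            mul_le_mul_of_nonneg_left (Amat_col_sum_le w N hw i) (by positivity)
        _ = Kf' * Kg' ^ 2 := mul_one _
    rw [h1, hK]
    linarith
  exact matrix_norm_bounds hn Hess Eb K hentry hrow hcol hK0
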